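/- Let E be a real inner product space, Z a type, and ℓ : E → Z → Z → ℝ a pairwise loss differentiable in its first argument with ‖∇ℓ(v, z, z')‖ ≤ L for all v ∈ E and z, z' ∈ Z (gradient taken in the first argument). Fix k ≥ 1, α ≥ 0, points a, a' ∈ Z and families b, b' : Fin k → Z, and define G(v) = v − (α/k)·Σ_{j=1}^{k} ∇ℓ(v, a, b_j) and G'(v) = v − (α/k)·Σ_{j=1}^{k} ∇ℓ(v, a', b'_j). Then for all w, w' ∈ E: (i) ‖G(w) − G'(w')‖ ≤ ‖w − w'‖ + 2αL; and (ii) if moreover G is η-expansive for some η ≥ 0, then ‖G(w) − G'(w')‖ ≤ η·‖w − w'‖ + 2αL. In particular ‖G(w) − G'(w')‖ ≤ min(η, 1)·‖w − w'‖ + 2αL. -/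

import Mathlib

/-- **Claim 1 of Lemmas 6/7.** Pairwise-SGD updates built from the same path but possibly
different current examples `a, a'` and previous examples `b, b'` satisfy
`‖G w − G' w'‖ ≤ ‖w − w'‖ + 2αL`, and if `G` is `η`-expansive (`η ≥ 0`) then also
`‖G w − G' w'‖ ≤ min(η,1)·‖w − w'‖ + 2αL` (and `≤ η·‖w − w'‖ + 2αL`). -/
theorem pairwise_sgd_update_diff_different_example
    {E : Type*} [NormedAddCommGroup E] [InnerProductSpace ℝ E] {Z : Type*}
    (ℓ : E → Z → Z → ℝ) (g : E → Z → Z → E) (L α : ℝ) (hα : 0 ≤ α)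
    (k : ℕ) (hk : 1 ≤ k)
    (hdiff : ∀ (v : E) (z z' : Z),
      HasFDerivAt (fun u => ℓ u z z') (InnerProductSpace.toDualMap ℝ E (g v z z')) v)
    (hL : ∀ (v : E) (z z' : Z), ‖g v z z'‖ ≤ L)
    (a a' : Z) (b b' : Fin k → Z) (G G' : E → E)
    (hG : ∀ v, G v = v - (α / k) • ∑ j, g v a (b j))
    (hG' : ∀ v, G' v = v - (α / k) • ∑ j, g v a' (b' j))
    (w w' : E) :
    ‖G w - G' w'‖ ≤ ‖w - w'‖ + 2 * α * L ∧
      ∀ η : ℝ, 0 ≤ η → (∀ v v', ‖G v - G v'‖ ≤ η * ‖v - v'‖) →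
        ‖G w - G' w'‖ ≤ η * ‖w - w'‖ + 2 * α * L ∧
          ‖G w - G' w'‖ ≤ min η 1 * ‖w - w'‖ + 2 * α * L := by
  have hk0 : (0:ℝ) < k := by exact_mod_cast hk
  have hL0 : 0 ≤ L := le_trans (norm_nonneg _) (hL 0 a a)
  -- bound on any sum term
  have key : ∀ (v : E) (c : Z) (d : Fin k → Z),
      ‖(α / k) • ∑ j, g v c (d j)‖ ≤ α * L := by
    intro v c d
    rw [norm_smul]
    have h1 : ‖∑ j, g v c (d j)‖ ≤ k * L := by
      calc ‖∑ j, g v c (d j)‖ ≤ ∑ j : Fin k, ‖g v c (d j)‖ := norm_sum_le _ _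
        _ ≤ ∑ _j : Fin k, L := Finset.sum_le_sum fun j _ => hL v c (d j)
        _ = k * L := by simp [mul_comm]
    have h2 : ‖α / (k:ℝ)‖ = α / k := by
      rw [Real.norm_eq_abs, abs_of_nonneg (div_nonneg hα hk0.le)]
    rw [h2]
    calc α / k * ‖∑ j, g v c (d j)‖ ≤ α / k * (k * L) := by
          apply mul_le_mul_of_nonneg_left h1 (div_nonneg hα hk0.le)
      _ = α * L := by field_simp
  -- first bound
  have h2aL : (0:ℝ) ≤ 2 * α * L := by positivity
  have main : ‖G w - G' w'‖ ≤ ‖w - w'‖ + 2 * α * L := by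
    rw [hG, hG']
    have : w - (α / k) • ∑ j, g w a (b j) - (w' - (α / k) • ∑ j, g w' a' (b' j))
        = (w - w') + (-((α / k) • ∑ j, g w a (b j)) + (α / k) • ∑ j, g w' a' (b' j)) := by
      abel
    rw [this]
    calc ‖_ + _‖ ≤ ‖w - w'‖ + ‖-((α / k) • ∑ j, g w a (b j)) + (α / k) • ∑ j, g w' a' (b' j)‖ :=
          norm_add_le _ _
      _ ≤ ‖w - w'‖ + (‖(α / k) • ∑ j, g w a (b j)‖ + ‖(α / k) • ∑ j, g w' a' (b' j)‖) := by
          gcongr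
          exact (norm_add_le _ _).trans (by rw [norm_neg])
      _ ≤ ‖w - w'‖ + (α * L + α * L) := by gcongr <;> exact key _ _ _
      _ = ‖w - w'‖ + 2 * α * L := by ring
  refine ⟨main, fun η hη hexp => ?_⟩
  have tail : ‖G w' - G' w'‖ ≤ 2 * α * L := by
    rw [hG, hG']
    have : w' - (α / k) • ∑ j, g w' a (b j) - (w' - (α / k) • ∑ j, g w' a' (b' j))
        = -((α / k) • ∑ j, g w' a (b j)) + (α / k) • ∑ j, g w' a' (b' j) := by abel
    rw [this]
    calc ‖_ + _‖ ≤ ‖(α / k) • ∑ j, g w' a (b j)‖ + ‖(α / k) • ∑ j, g w' a' (b' j)‖ :=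
          (norm_add_le _ _).trans (by rw [norm_neg])
      _ ≤ α * L + α * L := by gcongr <;> exact key _ _ _
      _ = 2 * α * L := by ring
  have heta : ‖G w - G' w'‖ ≤ η * ‖w - w'‖ + 2 * α * L := by
    calc ‖G w - G' w'‖ = ‖(G w - G w') + (G w' - G' w')‖ := by abel_nf
      _ ≤ ‖G w - G w'‖ + ‖G w' - G' w'‖ := norm_add_le _ _
      _ ≤ η * ‖w - w'‖ + 2 * α * L := add_le_add (hexp w w') tail
  refine ⟨heta, ?_⟩
  rcases min_cases η 1 with ⟨h, _⟩ | ⟨h, hlt⟩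
  · rw [h]; exact heta
  · rw [h, one_mul]; exact main
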